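/- arXiv:2009.00458 — 2 statements merged into one kernel-verified Lean document; each statement's English description precedes it below -/
import Mathlib

section
/- Let X be a bounded metric space, m a cardinal with 1 < m ≤ #X, and λ, λ' real numbers with λ' > λ ≥ diam X + α_m(X) and λ > 0. Then the simplex λΔ_m lies between X and λ'Δ_m: d_GH(X, λΔ_m) + d_GH(λΔ_m, λ'Δ_m) = d_GH(X, λ'Δ_m), where 2·d_GH(λΔ_m, λ'Δ_m) = λ' − λ > 0; that is, the metric segment [X, λΔ_m] can be extended beyond λΔ_m to λ'Δ_m. -/
open Metric Set
open scoped ENNReal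

/-- A correspondence between `X` and `Y`: a relation whose projections are surjective. -/
def IsCorrespondence {X Y : Type*} (R : Set (X × Y)) : Prop :=
  (∀ x : X, ∃ y : Y, (x, y) ∈ R) ∧ (∀ y : Y, ∃ x : X, (x, y) ∈ R)

/-- The distortion of a relation `R ⊆ X × Y`. -/
noncomputable def corrDistortion {X Y : Type*} [MetricSpace X] [MetricSpace Y]
    (R : Set (X × Y)) : ℝ≥0∞ :=
  ⨆ p ∈ R, ⨆ q ∈ R, ENNReal.ofReal |dist p.1 q.1 - dist p.2 q.2|

/-- The Gromov–Hausdorff distance between (arbitrary) metric spaces: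
half the infimum of distortions of correspondences. -/
noncomputable def ghDist (X Y : Type*) [MetricSpace X] [MetricSpace Y] : ℝ≥0∞ :=
  (⨅ (R : Set (X × Y)) (_ : IsCorrespondence R), corrDistortion R) / 2

/-- `alphaSup I X` is `α_m(X)` for `m = #I`: the supremum, over all partitions of `X`
into nonempty subsets indexed by `I`, of the infimum of distances between distinct parts. -/
noncomputable def alphaSup (I : Type v) (X : Type u) [MetricSpace X] : ℝ≥0∞ :=
  ⨆ D ∈ {D : I → Set X |
      (∀ i, (D i).Nonempty) ∧ (⋃ i, D i = Set.univ) ∧ Pairwise (Function.onFun Disjoint D)},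
    ⨅ (i : I) (j : I) (_ : i ≠ j), ⨅ x ∈ D i, ⨅ y ∈ D j, edist x y

/-! ### Auxiliary definitions and lemmas -/

/-- The (un-halved) infimum of distortions of correspondences. -/
noncomputable def infDis (X Y : Type*) [MetricSpace X] [MetricSpace Y] : ℝ≥0∞ :=
  ⨅ (R : Set (X × Y)) (_ : IsCorrespondence R), corrDistortion R

lemma ghDist_eq_infDis (X Y : Type*) [MetricSpace X] [MetricSpace Y] :
    ghDist X Y = infDis X Y / 2 := rfl

/-- `D` is a partition of `X` indexed by `I`. -/
def IsPart {I : Type v} {X : Type u} (D : I → Set X) : Prop :=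
  (∀ i, (D i).Nonempty) ∧ (⋃ i, D i = Set.univ) ∧ Pairwise (Function.onFun Disjoint D)

/-- The separation of a partition. -/
noncomputable def partAlpha {I : Type v} {X : Type u} [MetricSpace X] (D : I → Set X) : ℝ≥0∞ :=
  ⨅ (i : I) (j : I) (_ : i ≠ j), ⨅ x ∈ D i, ⨅ y ∈ D j, edist x y

lemma alphaSup_eq (I : Type v) (X : Type u) [MetricSpace X] :
    alphaSup I X = ⨆ (D : I → Set X) (_ : IsPart D), partAlpha D := rfl

section Aux

variable {X : Type u} {Y : Type v} [MetricSpace X] [MetricSpace Y]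

lemma le_corrDistortion {R : Set (X × Y)} {p q : X × Y} (hp : p ∈ R) (hq : q ∈ R) :
    ENNReal.ofReal |dist p.1 q.1 - dist p.2 q.2| ≤ corrDistortion R := by
  calc ENNReal.ofReal |dist p.1 q.1 - dist p.2 q.2|
      ≤ ⨆ q ∈ R, ENNReal.ofReal |dist p.1 q.1 - dist p.2 q.2| :=
        le_iSup₂ (f := fun r (_ : r ∈ R) =>
          ENNReal.ofReal |dist p.1 r.1 - dist p.2 r.2|) q hq
    _ ≤ corrDistortion R :=
        le_iSup₂ (f := fun p (_ : p ∈ R) =>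
          ⨆ q ∈ R, ENNReal.ofReal |dist p.1 q.1 - dist p.2 q.2|) p hp

lemma corrDistortion_le {R : Set (X × Y)} {c : ℝ≥0∞}
    (h : ∀ p ∈ R, ∀ q ∈ R, ENNReal.ofReal |dist p.1 q.1 - dist p.2 q.2| ≤ c) :
    corrDistortion R ≤ c := by
  exact iSup₂_le fun p hp => iSup₂_le fun q hq => h p hp q hq

lemma infDis_le {R : Set (X × Y)} (hR : IsCorrespondence R) :
    infDis X Y ≤ corrDistortion R :=
  (iInf_le _ R).trans (iInf_le _ hR)

lemma le_infDis {c : ℝ≥0∞} (h : ∀ R : Set (X × Y), IsCorrespondence R → c ≤ corrDistortion R) :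
    c ≤ infDis X Y :=
  le_iInf fun R => le_iInf fun hR => h R hR

variable {I : Type w}

lemma partAlpha_le_alphaSup {D : I → Set X} (hD : IsPart D) : partAlpha D ≤ alphaSup I X := by
  rw [alphaSup_eq]
  exact le_iSup₂ (f := fun D (_ : IsPart D) => partAlpha D) D hD

lemma partAlpha_le_edist {D : I → Set X} {i j : I} {x y : X}
    (hij : i ≠ j) (hx : x ∈ D i) (hy : y ∈ D j) : partAlpha D ≤ edist x y := by
  calc partAlpha D ≤ ⨅ x ∈ D i, ⨅ y ∈ D j, edist x y :=
        (iInf_le _ i).trans ((iInf_le _ j).trans (iInf_le _ hij))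
    _ ≤ ⨅ y ∈ D j, edist x y := le_iInf₂_iff.1 le_rfl x hx
    _ ≤ edist x y := le_iInf₂_iff.1 le_rfl y hy

end Aux

section Simplex

variable {X : Type u} {S : Type v} [MetricSpace X] [Nonempty X] [MetricSpace S]

/-- Upper bound: `infDis X S ≤ λ − α` for `S` a simplex with parameter `λ`. -/
lemma infDis_le_simplex (hXb : EMetric.diam (Set.univ : Set X) ≠ ⊤)
    {lam : ℝ} (hlam : 0 ≤ lam)
    (hS : ∀ p q : S, p ≠ q → dist p q = lam)
    (f : X → S) (hf : Function.Surjective f)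
    (hge : ENNReal.ofReal (Metric.diam (Set.univ : Set X)) + alphaSup S X
        ≤ ENNReal.ofReal lam) :
    infDis X S ≤ ENNReal.ofReal lam - alphaSup S X := by
  have hbd : Bornology.IsBounded (Set.univ : Set X) :=
    Metric.isBounded_iff_ediam_ne_top.2 hXb
  have hαle : alphaSup S X ≤ ENNReal.ofReal lam := (self_le_add_left _ _).trans hge
  have hαne : alphaSup S X ≠ ⊤ := (hαle.trans_lt ENNReal.ofReal_lt_top).ne
  have hdle : ENNReal.ofReal (Metric.diam (Set.univ : Set X)) ≤
      ENNReal.ofReal lam - alphaSup S X :=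
    (ENNReal.cancel_of_ne hαne).le_tsub_of_add_le_right hge
  have hdlam : Metric.diam (Set.univ : Set X) ≤ lam := by
    have := (self_le_add_right _ _).trans hge
    rwa [ENNReal.ofReal_le_ofReal_iff hlam] at this
  -- a partition exists
  have hpart : Nonempty {D : S → Set X // IsPart D} := by
    refine ⟨⟨fun s => f ⁻¹' {s}, fun s => hf s, ?_, ?_⟩⟩
    · exact Set.eq_univ_iff_forall.2 fun x => Set.mem_iUnion.2 ⟨f x, rfl⟩
    · intro s t hst
      simp only [Function.onFun, Set.disjoint_left]
      rintro x (rfl : f x = s) (rfl : f x = t)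
      exact hst rfl
  refine (ENNReal.cancel_of_ne hαne).le_tsub_of_add_le_right ?_
  rw [alphaSup_eq, iSup_subtype']
  rw [ENNReal.add_iSup]
  refine iSup_le fun D => ?_
  -- correspondence from partition D
  set R : Set (X × S) := {p | p.1 ∈ D.1 p.2} with hRdef
  have hcorr : IsCorrespondence R := by
    constructor
    · intro x
      have : x ∈ ⋃ i, D.1 i := D.2.2.1.symm ▸ Set.mem_univ x
      obtain ⟨s, hs⟩ := Set.mem_iUnion.1 this
      exact ⟨s, hs⟩
    · intro s
      obtain ⟨x, hx⟩ := D.2.1 s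
      exact ⟨x, hx⟩
  have hdis : corrDistortion R ≤ ENNReal.ofReal lam - partAlpha D.1 := by
    refine corrDistortion_le fun p hp q hq => ?_
    by_cases hpq : p.2 = q.2
    · have : dist p.2 q.2 = 0 := by rw [hpq, dist_self]
      rw [this, sub_zero, abs_of_nonneg dist_nonneg]
      calc ENNReal.ofReal (dist p.1 q.1)
          ≤ ENNReal.ofReal (Metric.diam (Set.univ : Set X)) :=
            ENNReal.ofReal_le_ofReal
              (Metric.dist_le_diam_of_mem hbd (Set.mem_univ _) (Set.mem_univ _))
        _ ≤ ENNReal.ofReal lam - alphaSup S X := hdle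
        _ ≤ ENNReal.ofReal lam - partAlpha D.1 :=
            tsub_le_tsub_left (partAlpha_le_alphaSup D.2) _
    · have hd : dist p.2 q.2 = lam := hS _ _ hpq
      have hle : dist p.1 q.1 ≤ lam :=
        (Metric.dist_le_diam_of_mem hbd (Set.mem_univ _) (Set.mem_univ _)).trans hdlam
      rw [hd, abs_sub_comm, abs_of_nonneg (sub_nonneg.2 hle),
        ENNReal.ofReal_sub _ dist_nonneg]
      refine tsub_le_tsub_left ?_ _
      rw [← edist_dist]
      exact partAlpha_le_edist hpq hp hq
  calc infDis X S + partAlpha D.1 ≤ (ENNReal.ofReal lam - partAlpha D.1) + partAlpha D.1 :=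
        add_le_add ((infDis_le hcorr).trans hdis) le_rfl
    _ = ENNReal.ofReal lam :=
        tsub_add_cancel_of_le ((partAlpha_le_alphaSup D.2).trans hαle)

/-- Lower bound: `λ − α ≤ infDis X S` for `S` a simplex with parameter `λ`. -/
lemma le_infDis_simplex (hXb : EMetric.diam (Set.univ : Set X) ≠ ⊤)
    {lam : ℝ} (hlam : 0 ≤ lam)
    (hS : ∀ p q : S, p ≠ q → dist p q = lam)
    (hge : ENNReal.ofReal (Metric.diam (Set.univ : Set X)) + alphaSup S X
        ≤ ENNReal.ofReal lam) :
    ENNReal.ofReal lam - alphaSup S X ≤ infDis X S := by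
  have hbd : Bornology.IsBounded (Set.univ : Set X) :=
    Metric.isBounded_iff_ediam_ne_top.2 hXb
  have hdlam : Metric.diam (Set.univ : Set X) ≤ lam := by
    have := (self_le_add_right _ _).trans hge
    rwa [ENNReal.ofReal_le_ofReal_iff hlam] at this
  refine le_infDis fun R hR => ?_
  by_cases hover : ∃ x : X, ∃ s t : S, s ≠ t ∧ (x, s) ∈ R ∧ (x, t) ∈ R
  · obtain ⟨x, s, t, hst, h1, h2⟩ := hover
    have := le_corrDistortion (p := (x, s)) (q := (x, t)) h1 h2
    simp only [dist_self, zero_sub, abs_neg] at this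
    rw [hS _ _ hst, abs_of_nonneg hlam] at this
    exact tsub_le_self.trans this
  · push_neg at hover
    set D : S → Set X := fun s => {x | (x, s) ∈ R} with hD
    have hDpart : IsPart D := by
      refine ⟨fun s => hR.2 s, ?_, ?_⟩
      · refine Set.eq_univ_iff_forall.2 fun x => ?_
        obtain ⟨s, hs⟩ := hR.1 x
        exact Set.mem_iUnion.2 ⟨s, hs⟩
      · intro s t hst
        simp only [Function.onFun, Set.disjoint_left]
        intro x hxs hxt
        exact hover x s t hst hxs hxt
    calc ENNReal.ofReal lam - alphaSup S X
        ≤ ENNReal.ofReal lam - partAlpha D :=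
          tsub_le_tsub_left (partAlpha_le_alphaSup hDpart) _
      _ ≤ corrDistortion R := by
          rw [tsub_le_iff_right, partAlpha]
          simp only [ENNReal.add_iInf, le_iInf_iff]
          intro i j hij x hx y hy
          have h1 : ENNReal.ofReal (lam - dist x y) ≤ corrDistortion R := by
            have := le_corrDistortion (p := (x, i)) (q := (y, j)) hx hy
            rw [hS _ _ hij, abs_sub_comm, abs_of_nonneg (sub_nonneg.2 ?_)] at this
            · exact this
            · exact (Metric.dist_le_diam_of_mem hbd (Set.mem_univ _)
                (Set.mem_univ _)).trans hdlam
          calc ENNReal.ofReal lam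
              = ENNReal.ofReal (lam - dist x y) + ENNReal.ofReal (dist x y) := by
                rw [← ENNReal.ofReal_add (by
                  have : dist x y ≤ lam := (Metric.dist_le_diam_of_mem hbd (Set.mem_univ _)
                    (Set.mem_univ _)).trans hdlam
                  linarith) dist_nonneg, sub_add_cancel]
            _ ≤ corrDistortion R + edist x y := by
                rw [edist_dist]; exact add_le_add h1 le_rfl

end Simplex

/-- `alphaSup` is monotone under a bijection of the index type. -/
lemma alphaSup_le_of_equiv {S : Type v} {T : Type w} {X : Type u} [MetricSpace X]
    (e : S ≃ T) : alphaSup S X ≤ alphaSup T X := by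
  rw [alphaSup_eq, alphaSup_eq]
  refine iSup₂_le fun D hD => ?_
  have hE : IsPart (fun t => D (e.symm t)) := by
    refine ⟨fun t => hD.1 _, ?_, ?_⟩
    · refine Set.eq_univ_iff_forall.2 fun x => ?_
      have : x ∈ ⋃ i, D i := hD.2.1.symm ▸ Set.mem_univ x
      obtain ⟨s, hs⟩ := Set.mem_iUnion.1 this
      exact Set.mem_iUnion.2 ⟨e s, by simpa using hs⟩
    · intro t t' htt'
      exact hD.2.2 (e.symm.injective.ne htt')
  refine le_trans ?_ (le_iSup₂ (fun t => D (e.symm t)) hE)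
  simp only [partAlpha, le_iInf_iff]
  intro t t' htt' x hx y hy
  exact partAlpha_le_edist (e.symm.injective.ne htt') hx hy

/-- The distance between two simplices of the same cardinality. -/
lemma infDis_simplex_simplex {S : Type u} {S' : Type v} [MetricSpace S] [MetricSpace S']
    [Nontrivial S] [Nontrivial S'] (e : S ≃ S')
    {lam lam' : ℝ} (hlam : 0 ≤ lam) (hlt : lam ≤ lam')
    (hS : ∀ p q : S, p ≠ q → dist p q = lam)
    (hS' : ∀ p q : S', p ≠ q → dist p q = lam') :
    infDis S S' = ENNReal.ofReal (lam' - lam) := by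
  refine le_antisymm ?_ ?_
  · -- upper bound via the graph of `e`
    have hcorr : IsCorrespondence {p : S × S' | e p.1 = p.2} :=
      ⟨fun s => ⟨e s, rfl⟩, fun t => ⟨e.symm t, by simp⟩⟩
    refine (infDis_le hcorr).trans (corrDistortion_le fun p hp q hq => ?_)
    by_cases hpq : p.1 = q.1
    · have h2 : p.2 = q.2 := by rw [← hp, ← hq, hpq]
      simp [hpq, h2]
    · have h2 : p.2 ≠ q.2 := by
        rw [← hp, ← hq]; exact e.injective.ne hpq
      rw [hS _ _ hpq, hS' _ _ h2, abs_sub_comm, abs_of_nonneg (by linarith)]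
  · refine le_infDis fun R hR => ?_
    by_cases hkey : ∃ p ∈ R, ∃ q ∈ R, p.1 ≠ q.1 ∧ p.2 ≠ q.2
    · obtain ⟨p, hp, q, hq, h1, h2⟩ := hkey
      have := le_corrDistortion hp hq
      rwa [hS _ _ h1, hS' _ _ h2, abs_sub_comm, abs_of_nonneg (by linarith)] at this
    · exfalso
      push_neg at hkey
      obtain ⟨s1, s2, hs⟩ := exists_pair_ne S
      obtain ⟨t1, ht1⟩ := hR.1 s1
      obtain ⟨t2, ht2⟩ := hR.1 s2
      have ht12 : t1 = t2 := hkey (s1, t1) ht1 (s2, t2) ht2 hs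
      obtain ⟨t3, ht3ne⟩ := exists_ne t1
      obtain ⟨s3, hs3⟩ := hR.2 t3
      have h31 : s3 = s1 := by
        by_contra h
        exact ht3ne (hkey (s3, t3) hs3 (s1, t1) ht1 h)
      have h32 : s3 = s2 := by
        by_contra h
        exact ht3ne (ht12 ▸ hkey (s3, t3) hs3 (s2, t2) ht2 h)
      exact hs (h31 ▸ h32)

/-- under the hypotheses of STATEMENT 13, for any `λ' > λ` the simplex
`λΔ_m` (the space `S`) lies between `X` and `λ'Δ_m` (the space `S'`, of the same
cardinality `m` with all nonzero distances `λ'`): the metric segment `[X, λΔ_m]`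
extends beyond `λΔ_m` to `λ'Δ_m`, with `2·d_GH(λΔ_m, λ'Δ_m) = λ' − λ > 0`. -/
theorem stmt14 {X S S' : Type u} [MetricSpace X] [Nonempty X] [MetricSpace S] [MetricSpace S']
    (hXb : EMetric.diam (Set.univ : Set X) ≠ ⊤)
    (lam lam' : ℝ) (hlam : 0 < lam) (hlt : lam < lam')
    (hS : ∀ p q : S, p ≠ q → dist p q = lam)
    (hS' : ∀ p q : S', p ≠ q → dist p q = lam')
    (hcard : Cardinal.mk S' = Cardinal.mk S)
    (hS1 : 1 < Cardinal.mk S) (hSX : Cardinal.mk S ≤ Cardinal.mk X)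
    (hge : ENNReal.ofReal (Metric.diam (Set.univ : Set X)) + alphaSup S X
        ≤ ENNReal.ofReal lam) :
    ghDist X S + ghDist S S' = ghDist X S' ∧
    ghDist X S' ≠ ⊤ ∧
    2 * ghDist S S' = ENNReal.ofReal (lam' - lam) := by
  have hntS : Nontrivial S := Cardinal.one_lt_iff_nontrivial.1 hS1
  obtain ⟨e'⟩ : Nonempty (S' ≃ S) := Cardinal.eq.1 hcard
  have hntS' : Nontrivial S' := e'.nontrivial
  -- surjection X → S
  obtain ⟨g⟩ : Nonempty (S ↪ X) := Cardinal.le_def _ _ |>.1 hSX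
  have hfs : Function.Surjective (Function.invFun g) :=
    Function.invFun_surjective g.injective
  have hfs' : Function.Surjective (fun x => e'.symm (Function.invFun g x)) :=
    e'.symm.surjective.comp hfs
  -- α for S' equals α for S
  have hα : alphaSup S' X = alphaSup S X :=
    le_antisymm (alphaSup_le_of_equiv e') (alphaSup_le_of_equiv e'.symm)
  have hαle : alphaSup S X ≤ ENNReal.ofReal lam := (self_le_add_left _ _).trans hge
  have hαle' : alphaSup S X ≤ ENNReal.ofReal lam' :=
    hαle.trans (ENNReal.ofReal_le_ofReal hlt.le)
  have hge' : ENNReal.ofReal (Metric.diam (Set.univ : Set X)) + alphaSup S' X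
      ≤ ENNReal.ofReal lam' := by
    rw [hα]; exact hge.trans (ENNReal.ofReal_le_ofReal hlt.le)
  -- the three distances
  have hXS : infDis X S = ENNReal.ofReal lam - alphaSup S X :=
    le_antisymm (infDis_le_simplex hXb hlam.le hS (Function.invFun g) hfs hge)
      (le_infDis_simplex hXb hlam.le hS hge)
  have hXS' : infDis X S' = ENNReal.ofReal lam' - alphaSup S X := by
    rw [← hα]
    exact le_antisymm
      (infDis_le_simplex hXb (hlam.le.trans hlt.le) hS' _ hfs' hge')
      (le_infDis_simplex hXb (hlam.le.trans hlt.le) hS' hge')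
  have hSS' : infDis S S' = ENNReal.ofReal (lam' - lam) :=
    infDis_simplex_simplex e'.symm hlam.le hlt.le hS hS'
  have hsum : infDis X S + infDis S S' = infDis X S' := by
    rw [hXS, hXS', hSS', ENNReal.ofReal_sub _ hlam.le, add_comm]
    exact tsub_add_tsub_cancel (ENNReal.ofReal_le_ofReal hlt.le) hαle
  refine ⟨?_, ?_, ?_⟩
  · rw [ghDist_eq_infDis, ghDist_eq_infDis, ghDist_eq_infDis,
      ENNReal.div_add_div_same, hsum]
  · rw [ghDist_eq_infDis, hXS']
    have h1 : infDis X S' ≠ ⊤ := by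
      rw [hXS']
      exact (tsub_le_self.trans_lt ENNReal.ofReal_lt_top).ne
    rw [← hXS']
    exact ne_top_of_le_ne_top h1 ENNReal.half_le_self
  · rw [ghDist_eq_infDis, hSS', mul_comm]
    exact ENNReal.div_mul_cancel two_ne_zero ENNReal.ofNat_ne_top
end

section
/- Let Y be a bounded metric space with points y₁, y₂ such that d(y₁,y₂) = diam Y, and let r₁, r₂ ≥ 0. Then the two-point extension Z_{r₁,r₂}(y₁,y₂) is a metric space with diam Z_{r₁,r₂}(y₁,y₂) = diam Y + r₁ + r₂, and the curve γ(t) = Z_{r₁t, r₂t}(y₁,y₂), t ∈ [0,1], satisfies 2·d_GH(γ(t₁), γ(t₂)) = |t₁ − t₂|·(r₁ + r₂) for all t₁, t₂ ∈ [0,1]; in particular γ is a shortest curve joining Y and Z_{r₁,r₂}(y₁,y₂). -/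
open Metric Set
open scoped ENNReal

/-- `Z` (together with the isometric embedding `ι` and the two points `z₁`, `z₂`) is the
two-point extension `Z_{r₁,r₂}(y₁,y₂)` of `Y`: every point of `Z` is either `ι y` or one
of `z₁`, `z₂`, with `dist z₁ z₂ = r₁ + dist y₁ y₂ + r₂` and
`dist (ι y) zᵢ = dist y yᵢ + rᵢ` (if `rᵢ = 0` the point `zᵢ` coincides with `ι yᵢ`). -/
structure IsTwoPointExt {Y Z : Type*} [MetricSpace Y] [MetricSpace Z]
    (y₁ y₂ : Y) (r₁ r₂ : ℝ) (ι : Y → Z) (z₁ z₂ : Z) : Prop where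
  isometry : Isometry ι
  covers : Set.range ι ∪ {z₁, z₂} = Set.univ
  dist_z₁_z₂ : dist z₁ z₂ = r₁ + dist y₁ y₂ + r₂
  dist_z₁ : ∀ y : Y, dist (ι y) z₁ = dist y y₁ + r₁
  dist_z₂ : ∀ y : Y, dist (ι y) z₂ = dist y y₂ + r₂

section Ext
variable {Y : Type u} [MetricSpace Y]

def basePt (y₁ y₂ : Y) : Y ⊕ Bool → Y
  | .inl u => u
  | .inr false => y₁
  | .inr true => y₂

def radius (a b : ℝ) : Y ⊕ Bool → ℝ
  | .inl _ => 0
  | .inr false => a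
  | .inr true => b

open Classical in
noncomputable def extDist (y₁ y₂ : Y) (a b : ℝ) (x y : Y ⊕ Bool) : ℝ :=
  if x = y then 0
  else dist (basePt y₁ y₂ x) (basePt y₁ y₂ y) + radius a b x + radius a b y

variable (y₁ y₂ : Y) (a b : ℝ)

lemma radius_nonneg (ha : 0 ≤ a) (hb : 0 ≤ b) : ∀ x : Y ⊕ Bool, 0 ≤ radius a b x
  | .inl _ => le_refl 0
  | .inr false => ha
  | .inr true => hb

lemma radius_add_le (ha : 0 ≤ a) (hb : 0 ≤ b) :
    ∀ {x y : Y ⊕ Bool}, x ≠ y → radius a b x + radius a b y ≤ a + b := by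
  rintro (u | _ | _) (v | _ | _) h <;> simp [radius] <;> first | linarith | simp at h

lemma extDist_self (x : Y ⊕ Bool) : extDist y₁ y₂ a b x x = 0 := if_pos rfl

lemma extDist_nonneg (ha : 0 ≤ a) (hb : 0 ≤ b) (x y : Y ⊕ Bool) :
    0 ≤ extDist y₁ y₂ a b x y := by
  unfold extDist
  split_ifs
  · exact le_refl 0
  · have := radius_nonneg a b ha hb x
    have := radius_nonneg a b ha hb y
    have := dist_nonneg (x := basePt y₁ y₂ x) (y := basePt y₁ y₂ y)
    linarith

lemma extDist_comm (x y : Y ⊕ Bool) :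
    extDist y₁ y₂ a b x y = extDist y₁ y₂ a b y x := by
  unfold extDist
  by_cases h : x = y
  · rw [if_pos h, if_pos h.symm]
  · rw [if_neg h, if_neg (Ne.symm h), dist_comm]
    ring

lemma extDist_triangle (ha : 0 ≤ a) (hb : 0 ≤ b) (x y z : Y ⊕ Bool) :
    extDist y₁ y₂ a b x z ≤ extDist y₁ y₂ a b x y + extDist y₁ y₂ a b y z := by
  by_cases hxz : x = z
  · subst hxz
    rw [extDist_self]
    have := extDist_nonneg y₁ y₂ a b ha hb x y
    have := extDist_nonneg y₁ y₂ a b ha hb y x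
    linarith
  by_cases hxy : x = y
  · subst hxy; rw [extDist_self]; linarith
  by_cases hyz : y = z
  · subst hyz; rw [extDist_self]; linarith
  · unfold extDist
    rw [if_neg hxz, if_neg hxy, if_neg hyz]
    have h1 := dist_triangle (basePt y₁ y₂ x) (basePt y₁ y₂ y) (basePt y₁ y₂ z)
    have h2 := radius_nonneg a b ha hb y
    linarith

lemma extDist_le (hd : ∀ u v : Y, dist u v ≤ dist y₁ y₂) (ha : 0 ≤ a) (hb : 0 ≤ b)
    (x y : Y ⊕ Bool) : extDist y₁ y₂ a b x y ≤ dist y₁ y₂ + a + b := by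
  unfold extDist
  have hD : (0:ℝ) ≤ dist y₁ y₂ := dist_nonneg
  split_ifs with h
  · linarith
  · have := hd (basePt y₁ y₂ x) (basePt y₁ y₂ y)
    have := radius_add_le a b ha hb h
    linarith

noncomputable def extPremetric (ha : 0 ≤ a) (hb : 0 ≤ b) : PseudoMetricSpace (Y ⊕ Bool) where
  dist := extDist y₁ y₂ a b
  dist_self := extDist_self y₁ y₂ a b
  dist_comm := extDist_comm y₁ y₂ a b
  dist_triangle := extDist_triangle y₁ y₂ a b ha hb

def ExtSpace (ha : 0 ≤ a) (hb : 0 ≤ b) : Type u :=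
  @SeparationQuotient _ (extPremetric y₁ y₂ a b ha hb).toUniformSpace.toTopologicalSpace

noncomputable instance ExtSpace.instMetricSpace (ha : 0 ≤ a) (hb : 0 ≤ b) :
    MetricSpace (ExtSpace y₁ y₂ a b ha hb) :=
  inferInstanceAs <| MetricSpace <|
    @SeparationQuotient _ (extPremetric y₁ y₂ a b ha hb).toUniformSpace.toTopologicalSpace

noncomputable def extMk (ha : 0 ≤ a) (hb : 0 ≤ b) (x : Y ⊕ Bool) : ExtSpace y₁ y₂ a b ha hb :=
  Quotient.mk'' x

lemma extMk_surjective (ha : 0 ≤ a) (hb : 0 ≤ b) :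
    Function.Surjective (extMk y₁ y₂ a b ha hb) := fun z => Quot.exists_rep z

lemma extMk_dist (ha : 0 ≤ a) (hb : 0 ≤ b) (x y : Y ⊕ Bool) :
    dist (extMk y₁ y₂ a b ha hb x) (extMk y₁ y₂ a b ha hb y) = extDist y₁ y₂ a b x y :=
  rfl

lemma ExtSpace.dist_le (hd : ∀ u v : Y, dist u v ≤ dist y₁ y₂) (ha : 0 ≤ a) (hb : 0 ≤ b)
    (z w : ExtSpace y₁ y₂ a b ha hb) : dist z w ≤ dist y₁ y₂ + a + b := by
  obtain ⟨x, rfl⟩ := extMk_surjective y₁ y₂ a b ha hb z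
  obtain ⟨x', rfl⟩ := extMk_surjective y₁ y₂ a b ha hb w
  rw [extMk_dist]
  exact extDist_le y₁ y₂ a b hd ha hb x x'


lemma extDist_inl_inl (u v : Y) : extDist y₁ y₂ a b (.inl u) (.inl v) = dist u v := by
  unfold extDist
  split_ifs with h
  · rw [show u = v from by injection h, dist_self]
  · simp [basePt, radius]

lemma extDist_inl_false (u : Y) : extDist y₁ y₂ a b (.inl u) (.inr false) = dist u y₁ + a := by
  unfold extDist
  rw [if_neg (by simp)]
  simp [basePt, radius]

lemma extDist_inl_true (u : Y) : extDist y₁ y₂ a b (.inl u) (.inr true) = dist u y₂ + b := by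
  unfold extDist
  rw [if_neg (by simp)]
  simp [basePt, radius]

lemma extDist_false_true : extDist y₁ y₂ a b (.inr false) (.inr true) = dist y₁ y₂ + a + b := by
  unfold extDist
  rw [if_neg (by simp)]
  simp [basePt, radius]

lemma ext_isTwoPointExt (ha : 0 ≤ a) (hb : 0 ≤ b) {c₁ c₂ : ℝ} (h1 : a = c₁) (h2 : b = c₂) :
    IsTwoPointExt y₁ y₂ c₁ c₂ (fun y => extMk y₁ y₂ a b ha hb (.inl y))
      (extMk y₁ y₂ a b ha hb (.inr false)) (extMk y₁ y₂ a b ha hb (.inr true)) := by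
  subst h1 h2
  constructor
  · exact Isometry.of_dist_eq fun u v => by
      rw [extMk_dist, extDist_inl_inl]
  · rw [Set.eq_univ_iff_forall]
    intro z
    obtain ⟨x, rfl⟩ := extMk_surjective y₁ y₂ a b ha hb z
    rcases x with u | _ | _
    · exact Set.mem_union_left _ ⟨u, rfl⟩
    · exact Set.mem_union_right _ (by simp)
    · exact Set.mem_union_right _ (by simp)
  · rw [extMk_dist, extDist_false_true]; ring
  · intro y; rw [extMk_dist, extDist_inl_false]
  · intro y; rw [extMk_dist, extDist_inl_true]

lemma ext_diam (hd : ∀ u v : Y, dist u v ≤ dist y₁ y₂) (ha : 0 ≤ a) (hb : 0 ≤ b) :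
    Metric.diam (Set.univ : Set (ExtSpace y₁ y₂ a b ha hb)) = dist y₁ y₂ + a + b := by
  have hD : (0:ℝ) ≤ dist y₁ y₂ := dist_nonneg
  have hbdd : Bornology.IsBounded (Set.univ : Set (ExtSpace y₁ y₂ a b ha hb)) :=
    Metric.isBounded_iff.2 ⟨dist y₁ y₂ + a + b,
      fun z _ w _ => ExtSpace.dist_le y₁ y₂ a b hd ha hb z w⟩
  apply le_antisymm
  · exact Metric.diam_le_of_forall_dist_le (by linarith)
      fun z _ w _ => ExtSpace.dist_le y₁ y₂ a b hd ha hb z w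
  · have h1 : dist (extMk y₁ y₂ a b ha hb (.inr false)) (extMk y₁ y₂ a b ha hb (.inr true))
        = dist y₁ y₂ + a + b := by rw [extMk_dist, extDist_false_true]
    rw [← h1]
    exact Metric.dist_le_diam_of_mem hbdd (Set.mem_univ _) (Set.mem_univ _)

end Ext

lemma corrDistortion_ge {X Z : Type*} [MetricSpace X] [MetricSpace Z] {R : Set (X × Z)}
    {p q : X × Z} (hp : p ∈ R) (hq : q ∈ R) :
    ENNReal.ofReal |dist p.1 q.1 - dist p.2 q.2| ≤ corrDistortion R :=
  le_iSup₂_of_le p hp (le_iSup₂_of_le q hq le_rfl)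

section GH
variable {Y : Type u} [MetricSpace Y] (y₁ y₂ : Y)

lemma extDist_abs_sub (r₁ r₂ s₁ s₂ : ℝ) (hr₁ : 0 ≤ r₁) (hr₂ : 0 ≤ r₂) (x x' : Y ⊕ Bool) :
    |extDist y₁ y₂ (r₁ * s₁) (r₂ * s₁) x x' - extDist y₁ y₂ (r₁ * s₂) (r₂ * s₂) x x'|
      ≤ |s₁ - s₂| * (r₁ + r₂) := by
  have h1 := le_abs_self (s₁ - s₂)
  have h2 := neg_abs_le (s₁ - s₂)
  have h3 := abs_nonneg (s₁ - s₂)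
  unfold extDist
  split_ifs with h
  · rw [sub_zero, abs_zero]; nlinarith
  · rw [abs_le]
    constructor <;>
      rcases x with u | _ | _ <;> rcases x' with v | _ | _ <;>
        simp [radius] <;> first | exact absurd rfl h | nlinarith

lemma ghKey (hd : ∀ u v : Y, dist u v ≤ dist y₁ y₂)
    (r₁ r₂ s₁ s₂ : ℝ) (hr₁ : 0 ≤ r₁) (hr₂ : 0 ≤ r₂)
    (ha₁ : 0 ≤ r₁ * s₁) (hb₁ : 0 ≤ r₂ * s₁) (ha₂ : 0 ≤ r₁ * s₂) (hb₂ : 0 ≤ r₂ * s₂) :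
    (⨅ (R : Set (ExtSpace y₁ y₂ (r₁ * s₁) (r₂ * s₁) ha₁ hb₁ ×
          ExtSpace y₁ y₂ (r₁ * s₂) (r₂ * s₂) ha₂ hb₂)) (_ : IsCorrespondence R),
        corrDistortion R) = ENNReal.ofReal (|s₁ - s₂| * (r₁ + r₂)) := by
  have hD : (0:ℝ) ≤ dist y₁ y₂ := dist_nonneg
  apply le_antisymm
  · -- upper bound: the diagonal correspondence
    set R₀ : Set (ExtSpace y₁ y₂ (r₁ * s₁) (r₂ * s₁) ha₁ hb₁ ×
        ExtSpace y₁ y₂ (r₁ * s₂) (r₂ * s₂) ha₂ hb₂) :=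
      Set.range (fun x : Y ⊕ Bool =>
        (extMk y₁ y₂ (r₁ * s₁) (r₂ * s₁) ha₁ hb₁ x,
         extMk y₁ y₂ (r₁ * s₂) (r₂ * s₂) ha₂ hb₂ x)) with hR₀
    have hcor : IsCorrespondence R₀ := by
      constructor
      · intro z
        obtain ⟨x, rfl⟩ := extMk_surjective y₁ y₂ (r₁ * s₁) (r₂ * s₁) ha₁ hb₁ z
        exact ⟨_, ⟨x, rfl⟩⟩
      · intro z
        obtain ⟨x, rfl⟩ := extMk_surjective y₁ y₂ (r₁ * s₂) (r₂ * s₂) ha₂ hb₂ z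
        exact ⟨_, ⟨x, rfl⟩⟩
    refine iInf₂_le_of_le R₀ hcor ?_
    refine iSup₂_le fun p hp => iSup₂_le fun q hq => ?_
    obtain ⟨x, rfl⟩ := hp
    obtain ⟨x', rfl⟩ := hq
    simp only [extMk_dist]
    exact ENNReal.ofReal_le_ofReal
      (extDist_abs_sub y₁ y₂ r₁ r₂ s₁ s₂ hr₁ hr₂ x x')
  · -- lower bound
    refine le_iInf₂ fun R hR => ?_
    rcases le_total s₁ s₂ with h | h
    · obtain ⟨x, hx⟩ := hR.2 (extMk y₁ y₂ (r₁ * s₂) (r₂ * s₂) ha₂ hb₂ (.inr false))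
      obtain ⟨x', hx'⟩ := hR.2 (extMk y₁ y₂ (r₁ * s₂) (r₂ * s₂) ha₂ hb₂ (.inr true))
      refine le_trans (ENNReal.ofReal_le_ofReal ?_) (corrDistortion_ge hx hx')
      have h2 : dist (extMk y₁ y₂ (r₁ * s₂) (r₂ * s₂) ha₂ hb₂ (.inr false))
          (extMk y₁ y₂ (r₁ * s₂) (r₂ * s₂) ha₂ hb₂ (.inr true))
            = dist y₁ y₂ + r₁ * s₂ + r₂ * s₂ := by
        rw [extMk_dist, extDist_false_true]
      have h3 : dist x x' ≤ dist y₁ y₂ + r₁ * s₁ + r₂ * s₁ :=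
        ExtSpace.dist_le y₁ y₂ _ _ hd ha₁ hb₁ x x'
      have h4 := neg_abs_le (dist x x' - (dist y₁ y₂ + r₁ * s₂ + r₂ * s₂))
      have h5 : |s₁ - s₂| = s₂ - s₁ := by rw [abs_of_nonpos (by linarith)]; ring
      rw [h5]
      dsimp only
      rw [h2]
      nlinarith
    · obtain ⟨x, hx⟩ := hR.1 (extMk y₁ y₂ (r₁ * s₁) (r₂ * s₁) ha₁ hb₁ (.inr false))
      obtain ⟨x', hx'⟩ := hR.1 (extMk y₁ y₂ (r₁ * s₁) (r₂ * s₁) ha₁ hb₁ (.inr true))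
      refine le_trans (ENNReal.ofReal_le_ofReal ?_) (corrDistortion_ge hx hx')
      have h2 : dist (extMk y₁ y₂ (r₁ * s₁) (r₂ * s₁) ha₁ hb₁ (.inr false))
          (extMk y₁ y₂ (r₁ * s₁) (r₂ * s₁) ha₁ hb₁ (.inr true))
            = dist y₁ y₂ + r₁ * s₁ + r₂ * s₁ := by
        rw [extMk_dist, extDist_false_true]
      have h3 : dist x x' ≤ dist y₁ y₂ + r₁ * s₂ + r₂ * s₂ :=
        ExtSpace.dist_le y₁ y₂ _ _ hd ha₂ hb₂ x x'
      have h4 := le_abs_self (dist (extMk y₁ y₂ (r₁ * s₁) (r₂ * s₁) ha₁ hb₁ (.inr false))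
          (extMk y₁ y₂ (r₁ * s₁) (r₂ * s₁) ha₁ hb₁ (.inr true)) - dist x x')
      have h5 : |s₁ - s₂| = s₁ - s₂ := abs_of_nonneg (by linarith)
      rw [h5]
      dsimp only
      rw [h2]
      rw [h2] at h4
      nlinarith

end GH

/-- the two-point extensions `Z_{r₁t, r₂t}(y₁,y₂)`, `t ∈ [0,1]`, exist as
metric spaces, `diam Z_{r₁t,r₂t} = diam Y + r₁t + r₂t`, and
`2·d_GH(γ(t₁), γ(t₂)) = |t₁ − t₂|·(r₁+r₂)`; in particular `γ` is a shortest curve from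
`Y` to `Z_{r₁,r₂}(y₁,y₂)`. -/
theorem stmt15 {Y : Type u} [MetricSpace Y] [Nonempty Y]
    (hYb : EMetric.diam (Set.univ : Set Y) ≠ ⊤)
    (y₁ y₂ : Y) (hdiam : dist y₁ y₂ = Metric.diam (Set.univ : Set Y))
    (r₁ r₂ : ℝ) (hr₁ : 0 ≤ r₁) (hr₂ : 0 ≤ r₂) :
    ∃ (Z : ℝ → Type u) (MZ : ∀ t, MetricSpace (Z t))
      (ι : ∀ t, Y → Z t) (z₁ : ∀ t, Z t) (z₂ : ∀ t, Z t),
      (∀ t, t ∈ Set.Icc (0 : ℝ) 1 →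
        @IsTwoPointExt Y (Z t) _ (MZ t) y₁ y₂ (r₁ * t) (r₂ * t) (ι t) (z₁ t) (z₂ t)) ∧
      (∀ t, t ∈ Set.Icc (0 : ℝ) 1 →
        @Metric.diam (Z t) (MZ t).toPseudoMetricSpace Set.univ
          = Metric.diam (Set.univ : Set Y) + r₁ * t + r₂ * t) ∧
      (∀ t₁, t₁ ∈ Set.Icc (0 : ℝ) 1 → ∀ t₂, t₂ ∈ Set.Icc (0 : ℝ) 1 →
        2 * @ghDist (Z t₁) (Z t₂) (MZ t₁) (MZ t₂)
          = ENNReal.ofReal (|t₁ - t₂| * (r₁ + r₂))) := by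
  have hbY : Bornology.IsBounded (Set.univ : Set Y) :=
    Metric.isBounded_iff_ediam_ne_top.2 hYb
  have hd : ∀ u v : Y, dist u v ≤ dist y₁ y₂ := fun u v => by
    rw [hdiam]
    exact Metric.dist_le_diam_of_mem hbY (Set.mem_univ u) (Set.mem_univ v)
  refine ⟨fun t => ExtSpace y₁ y₂ (r₁ * max t 0) (r₂ * max t 0)
      (mul_nonneg hr₁ (le_max_right _ _)) (mul_nonneg hr₂ (le_max_right _ _)),
    fun t => inferInstance,
    fun t y => extMk y₁ y₂ _ _ (mul_nonneg hr₁ (le_max_right _ _))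
      (mul_nonneg hr₂ (le_max_right _ _)) (.inl y),
    fun t => extMk y₁ y₂ _ _ (mul_nonneg hr₁ (le_max_right _ _))
      (mul_nonneg hr₂ (le_max_right _ _)) (.inr false),
    fun t => extMk y₁ y₂ _ _ (mul_nonneg hr₁ (le_max_right _ _))
      (mul_nonneg hr₂ (le_max_right _ _)) (.inr true), ?_, ?_, ?_⟩
  · intro t ht
    have hmax : max t 0 = t := max_eq_left ht.1
    exact ext_isTwoPointExt y₁ y₂ _ _ _ _ (by rw [hmax]) (by rw [hmax])
  · intro t ht
    have hmax : max t 0 = t := max_eq_left ht.1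
    rw [ext_diam y₁ y₂ _ _ hd _ _, hdiam, hmax]
  · intro t₁ ht₁ t₂ ht₂
    have h1 : max t₁ 0 = t₁ := max_eq_left ht₁.1
    have h2 : max t₂ 0 = t₂ := max_eq_left ht₂.1
    have hkey := ghKey y₁ y₂ hd r₁ r₂ (max t₁ 0) (max t₂ 0) hr₁ hr₂
      (mul_nonneg hr₁ (le_max_right _ _)) (mul_nonneg hr₂ (le_max_right _ _))
      (mul_nonneg hr₁ (le_max_right _ _)) (mul_nonneg hr₂ (le_max_right _ _))
    rw [ghDist, ENNReal.mul_div_cancel two_ne_zero ENNReal.ofNat_ne_top, hkey, h1, h2]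
end
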